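/- Let {J, J'} be a useful sub-system in Φ and d ∈ E_Ψ (a set of left coset representatives of N(Ψ) in W). The following are equivalent: (i) the tabloid {dJ} appears with non-zero coefficient in e_{J,J'}; (ii) there exists σ ∈ W(Ψ') with σ{J} = {dJ}; (iii) there exist ρ ∈ N(Ψ) and σ ∈ W(Ψ') such that d = σρ. -/

import Mathlib

open scoped Pointwise RealInnerProductSpace Classical

noncomputable section

variable {V : Type*} [NormedAddCommGroup V] [InnerProductSpace ℝ V]

/-- The reflection `τ_α` in the hyperplane orthogonal to `α` (the identity if `α = 0`):
`τ_α v = v - 2 (⟪α, v⟫ / ⟪α, α⟫) • α`. -/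
def tau (α : V) : V ≃ₗ[ℝ] V :=
  if hα : α = 0 then LinearEquiv.refl ℝ V
  else Module.reflection (f := (2 / ⟪α, α⟫) • (innerₛₗ ℝ α)) (x := α) (by
    have h : ⟪α, α⟫ ≠ 0 := inner_self_ne_zero.mpr hα
    simp only [LinearMap.smul_apply, innerₛₗ_apply_apply, smul_eq_mul]
    field_simp)

/-- The reflection group generated by the reflections `τ_α`, `α ∈ Φ`. -/
def WeylGroup (Φ : Set V) : Subgroup (V ≃ₗ[ℝ] V) :=
  Subgroup.closure (tau '' Φ)

variable (Φ : Set V)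

/-- The reflection subgroup `W(S)` of `W(Φ)` generated by reflections in elements of `S`. -/
def WeylSub (S : Set V) : Subgroup ↥(WeylGroup Φ) :=
  Subgroup.closure {w : ↥(WeylGroup Φ) | ∃ α ∈ S, (w : V ≃ₗ[ℝ] V) = tau α}

/-- `N(Ψ) = {w ∈ W | wΨ = Ψ}`, the setwise stabilizer of `Ψ` in the Weyl group. -/
def NSub (Ψ : Set V) : Subgroup ↥(WeylGroup Φ) :=
  MulAction.stabilizer ↥(WeylGroup Φ) Ψ

/-- `Φ` is a (not necessarily crystallographic) root system. -/
def IsRootSystem : Prop :=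
  Φ.Finite ∧ (∀ α ∈ Φ, α ≠ 0) ∧ (∀ α ∈ Φ, -α ∈ Φ) ∧
    (∀ α ∈ Φ, ∀ c : ℝ, c • α ∈ Φ → c = 1 ∨ c = -1) ∧
    ∀ α ∈ Φ, ∀ β ∈ Φ, tau α β ∈ Φ

/-- `Ψ` is a subsystem of `Φ`: a subset closed under its own reflections. -/
def IsSubsystem (Ψ : Set V) : Prop :=
  Ψ ⊆ Φ ∧ ∀ α ∈ Ψ, ∀ β ∈ Ψ, tau α β ∈ Ψ

/-- `Φp` is a positive system in `Φ`. -/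
def IsPositiveSystem (Φp : Set V) : Prop :=
  Φp ⊆ Φ ∧ ∀ α ∈ Φ, (α ∈ Φp ↔ ¬ (-α ∈ Φp))

/-- `J` is a simple system for the (sub)system `Ψ`: a linearly independent subset such that
every root of `Ψ` is a non-negative or non-positive combination of `J`. -/
def IsSimpleSystem (Ψ J : Set V) : Prop :=
  J ⊆ Ψ ∧ LinearIndependent ℝ ((↑) : J → V) ∧
    ∀ α ∈ Ψ, ∃ f : V →₀ ℝ, ↑f.support ⊆ J ∧
      ((∀ v, 0 ≤ f v) ∨ (∀ v, f v ≤ 0)) ∧ α = f.sum fun v c => c • v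

/-- `Ψ^⊥`: the largest subsystem of `Φ` orthogonal to `Ψ`. -/
def perp (Ψ : Set V) : Set V := {α ∈ Φ | ∀ β ∈ Ψ, ⟪α, β⟫ = 0}

/-- `{J, J'}` is a useful sub-system: `N(Ψ) ∩ W(Ψ') = 1` and `W(Ψ^⊥) ∩ W(Ψ'^⊥) = 1`. -/
def UsefulSubSystem (Ψ Ψ' : Set V) : Prop :=
  NSub Φ Ψ ⊓ WeylSub Φ Ψ' = ⊥ ∧ WeylSub Φ (perp Φ Ψ) ⊓ WeylSub Φ (perp Φ Ψ') = ⊥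

variable (K : Type*) [Field K]

/-- The set of Δ*-tabloids: left cosets of `N(Ψ)` in `W`. -/
abbrev Tab (Ψ : Set V) := ↥(WeylGroup Φ) ⧸ NSub Φ Ψ

/-- The permutation module `M^Ψ` with basis the Δ*-tabloids. -/
abbrev MPsi (Ψ : Set V) := Tab Φ Ψ →₀ K

/-- The action of `w ∈ W` on `M^Ψ`, permuting the tabloid basis. -/
def act {Ψ : Set V} (w : ↥(WeylGroup Φ)) (m : MPsi Φ K Ψ) : MPsi Φ K Ψ :=
  Finsupp.mapDomain (fun t => w • t) m

/-- The sign `s(w) = (-1)^{ℓ(w)} = det w`, viewed in the field `K`. -/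
def sgn (w : ↥(WeylGroup Φ)) : K :=
  if LinearMap.det ((w : V ≃ₗ[ℝ] V) : V →ₗ[ℝ] V) = 1 then 1 else -1

/-- `κ_{J'} = Σ_{σ ∈ W(Ψ')} s(σ) σ`, acting on `M^Ψ`. -/
def kappa (Ψ Ψ' : Set V) (m : MPsi Φ K Ψ) : MPsi Φ K Ψ :=
  ∑ᶠ σ ∈ (WeylSub Φ Ψ' : Set ↥(WeylGroup Φ)), sgn Φ K σ • act Φ K σ m

/-- The generalized Δ*-polytabloid `e_{J,J'} = κ_{J'} {J}`. -/
def polytabloid (Ψ Ψ' : Set V) : MPsi Φ K Ψ :=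
  kappa Φ K Ψ Ψ' (Finsupp.single (QuotientGroup.mk 1) 1)

/-- A good sub-system: a useful sub-system such that whenever `dΨ ∩ Ψ' = ∅`, the tabloid
`{dJ}` appears with non-zero coefficient in `e_{J,J'}`. -/
def GoodSubSystem (Ψ Ψ' : Set V) : Prop :=
  UsefulSubSystem Φ Ψ Ψ' ∧
    ∀ d : ↥(WeylGroup Φ), (d • Ψ) ∩ Ψ' = ∅ →
      polytabloid Φ K Ψ Ψ' (QuotientGroup.mk d) ≠ 0

/-- The submodule of the generalized Specht module: span of all `w·e_{J,J'}`. -/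
def SpechtSub (Ψ Ψ' : Set V) : Submodule K (MPsi Φ K Ψ) :=
  Submodule.span K (Set.range fun w : ↥(WeylGroup Φ) => act Φ K w (polytabloid Φ K Ψ Ψ'))

/-- The standard bilinear form on `M^Ψ` for which the tabloids are orthonormal. -/
def Bform (Ψ : Set V) : MPsi Φ K Ψ →ₗ[K] MPsi Φ K Ψ →ₗ[K] K :=
  Finsupp.lsum K fun t => LinearMap.toSpanSingleton K _ (Finsupp.lapply t)

/-- The orthogonal complement `S^{Ψ,Ψ'⊥}` of the Specht submodule in `M^Ψ`. -/
def SpechtPerp (Ψ Ψ' : Set V) : Submodule K (MPsi Φ K Ψ) :=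
  ⨅ y ∈ SpechtSub Φ K Ψ Ψ', LinearMap.ker ((Bform Φ K Ψ).flip y)

theorem statement6 (Ψ Ψ' J J' Φp : Set V) [Finite ↥(WeylGroup Φ)] [CharZero K]
    (hPhi : IsRootSystem Φ) (hPsi : IsSubsystem Φ Ψ) (hPsi' : IsSubsystem Φ Ψ')
    (hdisj : Ψ' ⊆ Φ \ Ψ) (hpos : IsPositiveSystem Φ Φp)
    (hJ : IsSimpleSystem Ψ J) (hJ' : IsSimpleSystem Ψ' J')
    (hJp : J ⊆ Φp) (hJ'p : J' ⊆ Φp)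
    (h : UsefulSubSystem Φ Ψ Ψ') (d : ↥(WeylGroup Φ)) :
    (polytabloid Φ K Ψ Ψ' (QuotientGroup.mk d) ≠ 0 ↔
      ∃ σ ∈ WeylSub Φ Ψ', (QuotientGroup.mk σ : Tab Φ Ψ) = QuotientGroup.mk d) ∧
    (polytabloid Φ K Ψ Ψ' (QuotientGroup.mk d) ≠ 0 ↔
      ∃ ρ ∈ NSub Φ Ψ, ∃ σ ∈ WeylSub Φ Ψ', d = σ * ρ) := by
  classical
  have hfin : ((WeylSub Φ Ψ' : Set ↥(WeylGroup Φ))).Finite := Set.toFinite _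
  have hval : polytabloid Φ K Ψ Ψ' (QuotientGroup.mk d)
      = ∑ σ ∈ hfin.toFinset,
          (if (QuotientGroup.mk σ : Tab Φ Ψ) = QuotientGroup.mk d then sgn Φ K σ else 0) := by
    rw [polytabloid, kappa, finsum_mem_eq_finite_toFinset_sum _ hfin, Finsupp.finset_sum_apply]
    refine Finset.sum_congr rfl fun σ _ => ?_
    rw [Finsupp.smul_apply, act, Finsupp.mapDomain_single]
    have hsm : σ • (QuotientGroup.mk 1 : Tab Φ Ψ) = QuotientGroup.mk σ := by
      show (QuotientGroup.mk (σ * 1) : Tab Φ Ψ) = QuotientGroup.mk σ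
      rw [mul_one]
    rw [hsm, Finsupp.single_apply]
    split <;> simp
  have hsgn : ∀ σ : ↥(WeylGroup Φ), sgn Φ K σ ≠ 0 := by
    intro σ
    unfold sgn
    split
    · exact one_ne_zero
    · exact neg_ne_zero.mpr one_ne_zero
  have huniq : ∀ σ ∈ WeylSub Φ Ψ', ∀ σ' ∈ WeylSub Φ Ψ',
      (QuotientGroup.mk σ : Tab Φ Ψ) = QuotientGroup.mk σ' → σ = σ' := by
    intro σ hσ σ' hσ' he
    have h1 : σ⁻¹ * σ' ∈ NSub Φ Ψ := QuotientGroup.eq.mp he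
    have h2 : σ⁻¹ * σ' ∈ WeylSub Φ Ψ' := mul_mem (inv_mem hσ) hσ'
    have h3 : σ⁻¹ * σ' ∈ (NSub Φ Ψ ⊓ WeylSub Φ Ψ' : Subgroup ↥(WeylGroup Φ)) := ⟨h1, h2⟩
    rw [h.1] at h3
    have : σ⁻¹ * σ' = 1 := h3
    exact inv_mul_eq_one.mp this
  have key : polytabloid Φ K Ψ Ψ' (QuotientGroup.mk d) ≠ 0 ↔
      ∃ σ ∈ WeylSub Φ Ψ', (QuotientGroup.mk σ : Tab Φ Ψ) = QuotientGroup.mk d := by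
    constructor
    · intro hne
      by_contra hc
      push_neg at hc
      apply hne
      rw [hval]
      refine Finset.sum_eq_zero fun σ hσ => ?_
      rw [if_neg (hc σ (hfin.mem_toFinset.mp hσ))]
    · rintro ⟨σ0, hσ0, he0⟩
      rw [hval, Finset.sum_eq_single_of_mem σ0 (hfin.mem_toFinset.mpr hσ0)]
      · rw [if_pos he0]; exact hsgn σ0
      · intro σ hσ hne
        rw [if_neg]
        intro hc
        exact hne (huniq σ (hfin.mem_toFinset.mp hσ) σ0 hσ0 (hc.trans he0.symm))
  refine ⟨key, key.trans ?_⟩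
  constructor
  · rintro ⟨σ, hσ, he⟩
    refine ⟨σ⁻¹ * d, QuotientGroup.eq.mp he, σ, hσ, ?_⟩
    rw [mul_inv_cancel_left]
  · rintro ⟨ρ, hρ, σ, hσ, hd⟩
    refine ⟨σ, hσ, QuotientGroup.eq.mpr ?_⟩
    rw [hd, inv_mul_cancel_left]
    exact hρ

end
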